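/- Let S be a closed, densely defined, antilinear operator on a Hilbert space H with S² = 1 on its domain (S is an involution). If S = JΔ^{1/2} is its polar decomposition with J antiunitary and Δ = S*S positive, then J² = 1, JΔ^{1/2}J = Δ^{-1/2}, and hence S = Δ^{-1/2}J. -/

import Mathlib

/-- For an antilinear involution `S = J ∘ Δ^{1/2}` (polar decomposition with antiunitary `J`
and positive invertible `P = Δ^{1/2}`, with inverse `Q = Δ^{-1/2}`), one has `J² = 1`,
`J Δ^{1/2} J = Δ^{-1/2}`, and hence `S = Δ^{-1/2} J`. -/
theorem tomita_polar_decomposition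
    {H : Type*} [NormedAddCommGroup H] [InnerProductSpace ℂ H] [CompleteSpace H]
    (J : H → H)
    (hJadd : ∀ x y : H, J (x + y) = J x + J y)
    (hJsmul : ∀ (c : ℂ) (x : H), J (c • x) = (starRingEnd ℂ) c • J x)
    (hJiso : ∀ x : H, ‖J x‖ = ‖x‖)
    (hJsurj : Function.Surjective J)
    (P Q : H →L[ℂ] H)
    (hPsa : IsSelfAdjoint P) (hQsa : IsSelfAdjoint Q)
    (hPpos : ∀ x : H, 0 ≤ (inner ℂ (P x) x : ℂ).re)
    (hQpos : ∀ x : H, 0 ≤ (inner ℂ (Q x) x : ℂ).re)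
    (hPQ : P.comp Q = 1) (hQP : Q.comp P = 1)
    (hS : ∀ x : H, J (P (J (P x))) = x) :
    (∀ x : H, J (J x) = x) ∧ (∀ x : H, J (P (J x)) = Q x) ∧ (∀ x : H, J (P x) = Q (J x)) := by
  have hPQx : ∀ x : H, P (Q x) = x := by
    intro x
    have := congrArg (fun T : H →L[ℂ] H => T x) hPQ
    simpa using this
  have hnJ : ∀ x : H, J (-x) = -J x := by
    intro x
    have := hJsmul (-1) x
    simpa using this
  have hJsub : ∀ x y : H, J (x - y) = J x - J y := by
    intro x y
    rw [sub_eq_add_neg, hJadd, hnJ, ← sub_eq_add_neg]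
  have hJinj : Function.Injective J := by
    intro x y h
    have h0 : ‖x - y‖ = 0 := by rw [← hJiso, hJsub, h, sub_self, norm_zero]
    have := norm_eq_zero.mp h0
    rwa [sub_eq_zero] at this
  -- inverse of J
  set Ji : H → H := Function.surjInv hJsurj with hJidef
  have hJJi : ∀ x : H, J (Ji x) = x := fun x => Function.surjInv_eq hJsurj x
  have hJiJ : ∀ x : H, Ji (J x) = x := fun x => hJinj (by rw [hJJi])
  -- J is "antiunitary": it flips inner ℂ products
  have hJJinner : ∀ u v : H, (inner ℂ (J u) (J v) : ℂ) = inner ℂ v u := by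
    intro u v
    have eI : ∀ a : H, (RCLike.I : ℂ) • J a = J (-((RCLike.I : ℂ) • a)) := by
      intro a
      rw [hnJ, hJsmul, RCLike.conj_I, neg_smul, neg_neg]
    have hIC : (RCLike.I : ℂ) = Complex.I := rfl
    have e1 : ‖J u + J v‖ = ‖v + u‖ := by rw [← hJadd, hJiso, add_comm]
    have e2 : ‖J u - J v‖ = ‖v - u‖ := by rw [← hJsub, hJiso, norm_sub_rev]
    have e3 : ‖J u - (RCLike.I : ℂ) • J v‖ = ‖v - (RCLike.I : ℂ) • u‖ := by
      rw [eI, ← hJsub, sub_neg_eq_add, hJiso]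
      have h' : v - (RCLike.I : ℂ) • u = (-(RCLike.I : ℂ)) • (u + (RCLike.I : ℂ) • v) := by
        rw [smul_add, smul_smul, hIC]
        rw [show (-Complex.I) * Complex.I = 1 by simp [Complex.I_mul_I]]
        rw [one_smul, neg_smul]
        abel
      rw [h', norm_smul, hIC]
      simp
    have e4 : ‖J u + (RCLike.I : ℂ) • J v‖ = ‖v + (RCLike.I : ℂ) • u‖ := by
      rw [eI, ← hJadd, ← sub_eq_add_neg, hJiso]
      have h' : v + (RCLike.I : ℂ) • u = (RCLike.I : ℂ) • (u - (RCLike.I : ℂ) • v) := by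
        rw [smul_sub, smul_smul, hIC]
        rw [Complex.I_mul_I, neg_one_smul]
        rw [sub_neg_eq_add]
        abel
      rw [h', norm_smul, hIC]
      simp
    rw [inner_eq_sum_norm_sq_div_four, inner_eq_sum_norm_sq_div_four, e1, e2, e3, e4]
  -- pairing identities
  have hJpair : ∀ u v : H, (inner ℂ (J u) v : ℂ) = inner ℂ (Ji v) u := by
    intro u v
    conv_lhs => rw [← hJJi v]
    exact hJJinner u (Ji v)
  have hJipair : ∀ a b : H, (inner ℂ (Ji a) b : ℂ) = inner ℂ (J b) a := fun a b =>
    (hJpair b a).symm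
  -- symmetry of P, Q
  have hPsym : ∀ x y : H, (inner ℂ (P x) y : ℂ) = inner ℂ x (P y) :=
    fun x y => (ContinuousLinearMap.isSelfAdjoint_iff_isSymmetric.mp hPsa) x y
  have hQsym : ∀ x y : H, (inner ℂ (Q x) y : ℂ) = inner ℂ x (Q y) :=
    fun x y => (ContinuousLinearMap.isSelfAdjoint_iff_isSymmetric.mp hQsa) x y
  -- claim 2 : J P J = Q
  have hd : ∀ x : H, J (P (J x)) = Q x := by
    intro x
    conv_lhs => rw [← hPQx x]
    exact hS (Q x)
  -- adjoint version : Ji P Ji = Q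
  have he : ∀ x : H, Ji (P (Ji x)) = Q x := by
    intro x
    apply ext_inner_right ℂ
    intro v
    calc (inner ℂ (Ji (P (Ji x))) v : ℂ)
        = inner ℂ (J v) (P (Ji x)) := hJipair _ _
      _ = inner ℂ (P (J v)) (Ji x) := (hPsym _ _).symm
      _ = (starRingEnd ℂ) (inner ℂ (Ji x) (P (J v))) := by rw [← inner_conj_symm]
      _ = (starRingEnd ℂ) (inner ℂ (J (P (J v))) x) := by rw [hJipair]
      _ = (starRingEnd ℂ) (inner ℂ (Q v) x) := by rw [hd]
      _ = inner ℂ x (Q v) := by rw [inner_conj_symm]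
      _ = inner ℂ (Q x) v := (hQsym _ _).symm
  have hf : ∀ x : H, P (Ji x) = J (Q x) := by
    intro x
    have := congrArg J (he x)
    rwa [hJJi] at this
  have hdJi : ∀ x : H, Q (Ji x) = J (P x) := by
    intro x
    have := hd (Ji x)
    rw [hJJi] at this
    exact this.symm
  -- Ji is additive and conjugate homogeneous
  have hJiadd : ∀ x y : H, Ji (x + y) = Ji x + Ji y := fun x y =>
    hJinj (by rw [hJJi, hJadd, hJJi, hJJi])
  have hJismul : ∀ (c : ℂ) (x : H), Ji (c • x) = (starRingEnd ℂ) c • Ji x := fun c x =>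
    hJinj (by rw [hJJi, hJsmul, hJJi, Complex.conj_conj])
  have hJinorm : ∀ x : H, ‖Ji x‖ = ‖x‖ := by
    intro x
    conv_rhs => rw [← hJJi x]
    rw [hJiso]
  -- the operator P' = J Q Ji
  let P'lin : H →ₗ[ℂ] H :=
    { toFun := fun x => J (Q (Ji x))
      map_add' := by
        intro x y
        show J (Q (Ji (x + y))) = J (Q (Ji x)) + J (Q (Ji y))
        rw [hJiadd, map_add, hJadd]
      map_smul' := by
        intro c x
        show J (Q (Ji (c • x))) = (RingHom.id ℂ) c • J (Q (Ji x))
        rw [hJismul, map_smul, hJsmul, Complex.conj_conj]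
        rfl }
  have hP'bound : ∀ x : H, ‖P'lin x‖ ≤ ‖Q‖ * ‖x‖ := by
    intro x
    show ‖J (Q (Ji x))‖ ≤ ‖Q‖ * ‖x‖
    rw [hJiso, ← hJinorm x]
    exact Q.le_opNorm (Ji x)
  let P' : H →L[ℂ] H := P'lin.mkContinuous ‖Q‖ hP'bound
  have hP'apply : ∀ x : H, P' x = J (Q (Ji x)) := fun _ => rfl
  -- P'^2 = P^2
  have hsq : P' ^ 2 = P ^ 2 := by
    ext x
    rw [pow_two, pow_two, ContinuousLinearMap.mul_apply, ContinuousLinearMap.mul_apply,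
      hP'apply, hP'apply, hJiJ, hdJi]
    conv_lhs => rw [show J (Q (J (P x))) = P (Ji (J (P x))) by rw [hf]]
    rw [hJiJ]
  -- positivity
  have hP0 : (0 : H →L[ℂ] H) ≤ P := by
    rw [ContinuousLinearMap.nonneg_iff_isPositive]
    exact ⟨ContinuousLinearMap.isSelfAdjoint_iff_isSymmetric.mp hPsa, fun x => hPpos x⟩
  have hP'sa : IsSelfAdjoint P' := by
    rw [ContinuousLinearMap.isSelfAdjoint_iff_isSymmetric]
    intro x y
    show (inner ℂ (J (Q (Ji x))) y : ℂ) = inner ℂ x (J (Q (Ji y)))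
    calc (inner ℂ (J (Q (Ji x))) y : ℂ)
        = inner ℂ (Ji y) (Q (Ji x)) := hJpair _ _
      _ = inner ℂ (Q (Ji y)) (Ji x) := (hQsym _ _).symm
      _ = (starRingEnd ℂ) (inner ℂ (Ji x) (Q (Ji y))) := by rw [← inner_conj_symm]
      _ = (starRingEnd ℂ) (inner ℂ (J (Q (Ji y))) x) := by rw [hJipair]
      _ = inner ℂ x (J (Q (Ji y))) := by rw [inner_conj_symm]
  have hP'0 : (0 : H →L[ℂ] H) ≤ P' := by
    rw [ContinuousLinearMap.nonneg_iff_isPositive]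
    refine ⟨ContinuousLinearMap.isSelfAdjoint_iff_isSymmetric.mp hP'sa, fun x => ?_⟩
    show (0 : ℝ) ≤ RCLike.re (inner ℂ (P' x) x : ℂ)
    have h1 : (inner ℂ (P' x) x : ℂ) = inner ℂ (Ji x) (Q (Ji x)) := by
      rw [hP'apply]; exact hJpair _ _
    have h2 : (inner ℂ (Ji x) (Q (Ji x)) : ℂ) = (starRingEnd ℂ) (inner ℂ (Q (Ji x)) (Ji x)) := by
      rw [inner_conj_symm]
    rw [h1, h2, RCLike.conj_re]
    exact hQpos (Ji x)
  -- P = P' by uniqueness of the positive square root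
  have hPP' : P = P' := by
    have h1 := CFC.sqrt_sq P hP0
    rw [← hsq, CFC.sqrt_sq P' hP'0] at h1
    exact h1.symm
  -- J ∘ J = id on the range of P, hence everywhere
  have hJJP : ∀ z : H, J (J (P z)) = P z := by
    intro z
    conv_rhs => rw [hPP', hP'apply, hdJi]
  have claim1 : ∀ x : H, J (J x) = x := by
    intro x
    have := hJJP (Q x)
    rwa [hPQx x] at this
  refine ⟨claim1, hd, fun x => ?_⟩
  have := hd (J x)
  rwa [claim1] at this
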